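/- Macdonald's hyperfactorial form of MacMahon's formula: for all natural numbers a, b, c, the identity of rational numbers H(a)·H(b)·H(c)·H(a+b+c) / ( H(a+b)·H(a+c)·H(b+c) ) = ∏_{i=1}^a ∏_{j=1}^b ∏_{k=1}^c (i+j+k−1)/(i+j+k−2) holds, where H(n) := ∏_{k=0}^{n−1} k! = (n−1)!·(n−2)!⋯1!·0! (so H(0) = H(1) = 1). -/

import Mathlib

/-- The hyperfactorial-type product `H(n) = 0! · 1! ⋯ (n-1)!` (so `H 0 = H 1 = 1`),
viewed as a rational number. -/
def Hfac (n : ℕ) : ℚ :=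
  ∏ k ∈ Finset.range n, (Nat.factorial k : ℚ)

lemma Hfac_succ (n : ℕ) : Hfac (n + 1) = Hfac n * (Nat.factorial n : ℚ) := by
  simp [Hfac, Finset.prod_range_succ]

lemma Hfac_ne_zero (n : ℕ) : Hfac n ≠ 0 := by
  unfold Hfac
  exact Finset.prod_ne_zero_iff.2 fun k _ => by
    exact_mod_cast Nat.factorial_ne_zero k

lemma fact_ne_zero (n : ℕ) : (Nat.factorial n : ℚ) ≠ 0 := by
  exact_mod_cast Nat.factorial_ne_zero n

lemma L1 (a c : ℕ) : ∏ i ∈ Finset.Icc 1 a, ((i : ℚ) + c)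
    = (Nat.factorial (a + c) : ℚ) / (Nat.factorial c : ℚ) := by
  induction a with
  | zero => simp [div_self (fact_ne_zero c)]
  | succ a ih =>
    rw [Finset.prod_Icc_succ_top (by omega : 1 ≤ a + 1), ih]
    have h : (Nat.factorial (a + 1 + c) : ℚ)
        = (Nat.factorial (a + c) : ℚ) * ((a : ℚ) + 1 + c) := by
      have : a + 1 + c = (a + c) + 1 := by omega
      rw [this, Nat.factorial_succ]
      push_cast
      ring
    rw [h]
    field_simp
    push_cast
    ring

lemma L2 (b c i : ℕ) (hi : 1 ≤ i) :
    ∏ j ∈ Finset.Icc 1 b, (((i : ℚ) + j + c) / ((i : ℚ) + j + c - 1))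
      = ((i : ℚ) + b + c) / ((i : ℚ) + c) := by
  have hipos : (1 : ℚ) ≤ (i : ℚ) := by exact_mod_cast hi
  have hc0 : (i : ℚ) + c ≠ 0 := by nlinarith [Nat.cast_nonneg (α := ℚ) c]
  induction b with
  | zero => simp [div_self hc0]
  | succ b ih =>
    rw [Finset.prod_Icc_succ_top (by omega : 1 ≤ b + 1), ih]
    have h1 : (i : ℚ) + b + c ≠ 0 := by
      have : (0 : ℚ) ≤ (b : ℚ) + (c : ℚ) := by positivity
      nlinarith
    have h2 : (i : ℚ) + (b + 1 : ℕ) + c - 1 = (i : ℚ) + b + c := by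
      push_cast; ring
    have h3 : (i : ℚ) + (b + 1 : ℕ) + c = (i : ℚ) + (b + 1) + c := by
      push_cast; ring
    rw [h2, h3]
    have h4 : (i : ℚ) + c ≠ 0 := by nlinarith [Nat.cast_nonneg (α := ℚ) c]
    field_simp

lemma key (a b c : ℕ) :
    ∏ i ∈ Finset.Icc 1 a, ∏ j ∈ Finset.Icc 1 b,
        (((i : ℚ) + j + c) / ((i : ℚ) + j + c - 1))
      = (Nat.factorial (a + b + c) : ℚ) * (Nat.factorial c : ℚ)
        / ((Nat.factorial (a + c) : ℚ) * (Nat.factorial (b + c) : ℚ)) := by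
  have h : ∀ i ∈ Finset.Icc 1 a,
      ∏ j ∈ Finset.Icc 1 b, (((i : ℚ) + j + c) / ((i : ℚ) + j + c - 1))
        = ((i : ℚ) + (b + c : ℕ)) / ((i : ℚ) + c) := by
    intro i hi
    rw [L2 b c i (Finset.mem_Icc.1 hi).1]
    push_cast
    ring_nf
  rw [Finset.prod_congr rfl h, Finset.prod_div_distrib, L1 a (b + c), L1 a c]
  have : a + (b + c) = a + b + c := by omega
  rw [this]
  have h1 := fact_ne_zero c
  have h2 := fact_ne_zero (b + c)
  have h3 := fact_ne_zero (a + c)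
  have h4 := fact_ne_zero (a + b + c)
  field_simp

/-- **Macdonald's hyperfactorial form of MacMahon's formula**: for all natural numbers
`a`, `b`, `c`,
`H(a)·H(b)·H(c)·H(a+b+c) / (H(a+b)·H(a+c)·H(b+c))
  = ∏_{i=1}^a ∏_{j=1}^b ∏_{k=1}^c (i+j+k-1)/(i+j+k-2)`. -/
theorem macdonald_macmahon (a b c : ℕ) :
    Hfac a * Hfac b * Hfac c * Hfac (a + b + c) / (Hfac (a + b) * Hfac (a + c) * Hfac (b + c))
      = ∏ i ∈ Finset.Icc 1 a, ∏ j ∈ Finset.Icc 1 b, ∏ k ∈ Finset.Icc 1 c,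
          (((i : ℚ) + j + k - 1) / ((i : ℚ) + j + k - 2)) := by
  induction c with
  | zero =>
    simp only [Finset.Icc_self, Nat.add_zero]
    simp only [show Finset.Icc 1 0 = (∅ : Finset ℕ) by simp, Finset.prod_empty,
      Finset.prod_const_one]
    rw [show Hfac 0 = 1 by simp [Hfac]]
    field_simp [Hfac_ne_zero]
  | succ c ih =>
    have hsplit : ∀ i ∈ Finset.Icc 1 a, ∀ j ∈ Finset.Icc 1 b,
        ∏ k ∈ Finset.Icc 1 (c + 1), (((i : ℚ) + j + k - 1) / ((i : ℚ) + j + k - 2))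
          = (∏ k ∈ Finset.Icc 1 c, (((i : ℚ) + j + k - 1) / ((i : ℚ) + j + k - 2)))
            * (((i : ℚ) + j + c) / ((i : ℚ) + j + c - 1)) := by
      intro i _ j _
      rw [Finset.prod_Icc_succ_top (by omega : 1 ≤ c + 1)]
      congr 1
      push_cast
      ring_nf
    have hRHS : ∏ i ∈ Finset.Icc 1 a, ∏ j ∈ Finset.Icc 1 b, ∏ k ∈ Finset.Icc 1 (c + 1),
        (((i : ℚ) + j + k - 1) / ((i : ℚ) + j + k - 2))
        = (∏ i ∈ Finset.Icc 1 a, ∏ j ∈ Finset.Icc 1 b, ∏ k ∈ Finset.Icc 1 c,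
            (((i : ℚ) + j + k - 1) / ((i : ℚ) + j + k - 2)))
          * (∏ i ∈ Finset.Icc 1 a, ∏ j ∈ Finset.Icc 1 b,
            (((i : ℚ) + j + c) / ((i : ℚ) + j + c - 1))) := by
      rw [← Finset.prod_mul_distrib]
      refine Finset.prod_congr rfl fun i hi => ?_
      rw [← Finset.prod_mul_distrib]
      exact Finset.prod_congr rfl fun j hj => hsplit i hi j hj
    rw [hRHS, ← ih, key a b c]
    rw [show a + b + (c + 1) = (a + b + c) + 1 by omega,
        show a + (c + 1) = (a + c) + 1 by omega,
        show b + (c + 1) = (b + c) + 1 by omega,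
        Hfac_succ, Hfac_succ, Hfac_succ, Hfac_succ]
    have h1 := Hfac_ne_zero (a + b)
    have h2 := Hfac_ne_zero (a + c)
    have h3 := Hfac_ne_zero (b + c)
    have h4 := fact_ne_zero (a + c)
    have h5 := fact_ne_zero (b + c)
    field_simp
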